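/- Let (V, Q) be an FBAS with top tier T. Then every minimal splitting set S of (V, Q) satisfies S ⊆ T. -/
import Mathlib


open Finset

variable {α : Type*} [DecidableEq α]

/-- `U` is a quorum of the FBAS `(V, Q)`: a nonempty subset of `V` containing,
for every member `v`, some slice `q ∈ Q v` with `q ⊆ U`. -/
def IsQuorum (V : Finset α) (Q : α → Finset (Finset α)) (U : Finset α) : Prop :=
  U ⊆ V ∧ U.Nonempty ∧ ∀ v ∈ U, ∃ q ∈ Q v, q ⊆ U

/-- A minimal quorum: a quorum none of whose proper subsets is a quorum. -/
def IsMinimalQuorum (V : Finset α) (Q : α → Finset (Finset α)) (U : Finset α) : Prop :=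
  IsQuorum V Q U ∧ ∀ U' ⊂ U, ¬IsQuorum V Q U'

/-- A blocking set: a subset of `V` intersecting every quorum of `(V, Q)`. -/
def IsBlocking (V : Finset α) (Q : α → Finset (Finset α)) (B : Finset α) : Prop :=
  B ⊆ V ∧ ∀ U, IsQuorum V Q U → (B ∩ U).Nonempty

/-- A minimal blocking set: a blocking set none of whose proper subsets is blocking. -/
def IsMinimalBlocking (V : Finset α) (Q : α → Finset (Finset α)) (B : Finset α) : Prop :=
  IsBlocking V Q B ∧ ∀ B' ⊂ B, ¬IsBlocking V Q B'

/-- A splitting set: a subset of `V` containing the intersection of two distinct quorums. -/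
def IsSplitting (V : Finset α) (Q : α → Finset (Finset α)) (S : Finset α) : Prop :=
  S ⊆ V ∧ ∃ U₁ U₂, IsQuorum V Q U₁ ∧ IsQuorum V Q U₂ ∧ U₁ ≠ U₂ ∧ U₁ ∩ U₂ ⊆ S

/-- A minimal splitting set: a splitting set none of whose proper subsets is splitting. -/
def IsMinimalSplitting (V : Finset α) (Q : α → Finset (Finset α)) (S : Finset α) : Prop :=
  IsSplitting V Q S ∧ ∀ S' ⊂ S, ¬IsSplitting V Q S'

/-- Well-formedness of an FBAS `(V, Q)`: every slice of every node `v ∈ V`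
contains `v` and is a subset of `V`. -/
def WellFormed (V : Finset α) (Q : α → Finset (Finset α)) : Prop :=
  ∀ v ∈ V, ∀ q ∈ Q v, v ∈ q ∧ q ⊆ V

/-- `T` is the top tier of `(V, Q)`: the union of all minimal quorums. -/
def IsTopTier (V : Finset α) (Q : α → Finset (Finset α)) (T : Finset α) : Prop :=
  ∀ v, v ∈ T ↔ ∃ U, IsMinimalQuorum V Q U ∧ v ∈ U

/-- `(V, Q)` enjoys quorum intersection: any two quorums share a node. -/
def QuorumIntersection (V : Finset α) (Q : α → Finset (Finset α)) : Prop :=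
  ∀ U₁ U₂, IsQuorum V Q U₁ → IsQuorum V Q U₂ → (U₁ ∩ U₂).Nonempty

/-- Every quorum contains a minimal quorum. -/
lemma exists_minimal_quorum_subset (V : Finset α) (Q : α → Finset (Finset α)) :
    ∀ U : Finset α, IsQuorum V Q U → ∃ M, M ⊆ U ∧ IsMinimalQuorum V Q M := by
  intro U
  induction U using Finset.strongInduction with
  | _ U ih =>
    intro hU
    by_cases h : ∀ U' ⊂ U, ¬IsQuorum V Q U'
    · exact ⟨U, subset_rfl, hU, h⟩
    · push_neg at h
      obtain ⟨U', hsub, hq⟩ := h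
      obtain ⟨M, hM1, hM2⟩ := ih U' hsub hq
      exact ⟨M, hM1.trans hsub.subset, hM2⟩

/-- every minimal splitting set is contained in the top tier. -/
theorem minimal_splitting_subset_top_tier
    (V : Finset α) (Q : α → Finset (Finset α)) (hwf : WellFormed V Q)
    (T : Finset α) (hT : IsTopTier V Q T)
    (S : Finset α) (hS : IsMinimalSplitting V Q S) :
    S ⊆ T := by
  obtain ⟨⟨hSV, U₁, U₂, hQ1, hQ2, hne, hsub⟩, hmin⟩ := hS
  -- S = U₁ ∩ U₂
  have hsplit : IsSplitting V Q (U₁ ∩ U₂) :=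
    ⟨(Finset.inter_subset_left).trans hQ1.1, U₁, U₂, hQ1, hQ2, hne, subset_rfl⟩
  have hEq : U₁ ∩ U₂ = S := by
    by_contra h
    exact hmin _ (ssubset_of_subset_of_ne hsub h) hsplit
  obtain ⟨M₁, hM₁sub, hM₁⟩ := exists_minimal_quorum_subset V Q U₁ hQ1
  obtain ⟨M₂, hM₂sub, hM₂⟩ := exists_minimal_quorum_subset V Q U₂ hQ2
  have hM₁T : M₁ ⊆ T := fun v hv => (hT v).mpr ⟨M₁, hM₁, hv⟩
  have hM₂T : M₂ ⊆ T := fun v hv => (hT v).mpr ⟨M₂, hM₂, hv⟩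
  by_cases hMM : M₁ = M₂
  · -- M₁ ⊆ U₁ ∩ U₂ = S; M₁ differs from one of U₁, U₂
    have hMS : M₁ ⊆ S := by
      rw [← hEq]
      exact Finset.subset_inter hM₁sub (hMM ▸ hM₂sub)
    have key : ∀ U, IsQuorum V Q U → M₁ ≠ U → S ⊆ T := by
      intro U hU hneU
      have hsplit' : IsSplitting V Q M₁ :=
        ⟨hM₁.1.1, M₁, U, hM₁.1, hU, hneU, Finset.inter_subset_left⟩
      have : M₁ = S := by
        by_contra h
        exact hmin _ (ssubset_of_subset_of_ne hMS h) hsplit'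
      exact this ▸ hM₁T
    by_cases h1 : M₁ = U₁
    · exact key U₂ hQ2 (fun h => hne (h1 ▸ h ▸ rfl))
    · exact key U₁ hQ1 h1
  · by_cases hMMne : M₁ = M₂
    · exact absurd hMMne hMM
    · have hsub' : M₁ ∩ M₂ ⊆ S := by
        rw [← hEq]
        exact Finset.inter_subset_inter hM₁sub hM₂sub
      have hsplit' : IsSplitting V Q (M₁ ∩ M₂) :=
        ⟨(Finset.inter_subset_left).trans hM₁.1.1, M₁, M₂, hM₁.1, hM₂.1, hMM, subset_rfl⟩
      have : M₁ ∩ M₂ = S := by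
        by_contra h
        exact hmin _ (ssubset_of_subset_of_ne hsub' h) hsplit'
      rw [← this]
      exact (Finset.inter_subset_left).trans hM₁T
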